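/- In the covering setting, for every ε > 0 there exists a finite set F of bounded functions ℝ^{2d} → ℝ with cardinality at most max(1, (2 L_K S_f (h₁^{−1}+h₂^{−1}) diam(D) / ε)^{2d}) such that for every g ∈ 𝒢 there is φ ∈ F with sup_{z∈ℝ^{2d}} |f(z) g(z) − φ(z)| ≤ ε; that is, the covering number of 𝒢f with respect to the sup-norm distance satisfies 𝒩(ε, 𝒢f, d_∞) ≤ max(1, (2 L_K S_f (h₁^{−1}+h₂^{−1}) diam(D) / ε)^{2d}). -/

import Mathlib

open MeasureTheory ProbabilityTheory Filter Set

noncomputable section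

abbrev Ed (d : ℕ) := EuclideanSpace ℝ (Fin d)
abbrev Ed2 (d : ℕ) := Ed d × Ed d

/-- Points of `ℝ^{2d}` with all coordinates rational. -/
def ratPoints (d : ℕ) : Set (Ed2 d) :=
  {z | (∀ i, ∃ q : ℚ, z.1 i = (q : ℝ)) ∧ ∀ i, ∃ q : ℚ, z.2 i = (q : ℝ)}

/-- Sup-norm of a real-valued function. -/
noncomputable def supNorm {α : Type*} (g : α → ℝ) : ℝ := ⨆ x, |g x|

/-- The kernel translate `w ↦ K₁((x−w₁)/h₁) K₂((y−w₂)/h₂)` centered at `zc = (x,y)`. -/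
noncomputable def Gfun (d : ℕ) (K₁ K₂ : Ed d → ℝ) (h₁ h₂ : ℝ) (zc : Ed2 d) :
    Ed2 d → ℝ :=
  fun w => K₁ (h₁⁻¹ • (zc.1 - w.1)) * K₂ (h₂⁻¹ • (zc.2 - w.2))

/-- The class `𝒢 = {K((x−·)/h₁, (y−·)/h₂) : (x,y) ∈ D ∩ ℚ^{2d}}`. -/
noncomputable def Gclass (d : ℕ) (K₁ K₂ : Ed d → ℝ) (h₁ h₂ : ℝ) (D : Set (Ed2 d)) :
    Set (Ed2 d → ℝ) :=
  Gfun d K₁ K₂ h₁ h₂ '' (D ∩ ratPoints d)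

/-- `𝒦`: the union of the supports of the elements of `𝒢`. -/
noncomputable def bigK (d : ℕ) (K₁ K₂ : Ed d → ℝ) (h₁ h₂ : ℝ) (D : Set (Ed2 d)) :
    Set (Ed2 d) :=
  ⋃ g ∈ Gclass d K₁ K₂ h₁ h₂ D, Function.support g

/-- `S_f = sup_{z ∈ 𝒦} |f(z)|`. -/
noncomputable def Sf (d : ℕ) (K₁ K₂ : Ed d → ℝ) (h₁ h₂ : ℝ) (D : Set (Ed2 d))
    (f : Ed2 d → ℝ) : ℝ :=
  ⨆ z : ↥(bigK d K₁ K₂ h₁ h₂ D), |f (z : Ed2 d)|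

/-- `L_K = L₁‖K₂‖_∞ + L₂‖K₁‖_∞`. -/
noncomputable def LK (d : ℕ) (K₁ K₂ : Ed d → ℝ) (L₁ L₂ : ℝ) : ℝ :=
  L₁ * supNorm K₂ + L₂ * supNorm K₁

/-- Euclidean diameter of `D ⊂ ℝ^d × ℝ^d`. -/
noncomputable def diamE (d : ℕ) (D : Set (Ed2 d)) : ℝ :=
  sSup {r : ℝ | ∃ z ∈ D, ∃ w ∈ D, r = Real.sqrt (‖z.1 - w.1‖ ^ 2 + ‖z.2 - w.2‖ ^ 2)}

/-- Auxiliary: embed a plain function as a point of Euclidean space. -/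
def mkE (d : ℕ) (v : Fin d → ℝ) : Ed d := WithLp.toLp 2 v

lemma coord_le_norm {d : ℕ} (v : Ed d) (i : Fin d) : |v i| ≤ ‖v‖ := by
  rw [EuclideanSpace.norm_eq v]
  have h1 : |v i| = Real.sqrt (‖v i‖ ^ 2) := by rw [Real.sqrt_sq_eq_abs]; simp
  rw [h1]
  apply Real.sqrt_le_sqrt
  exact Finset.single_le_sum (f := fun j => ‖v j‖ ^ 2) (fun j _ => by positivity)
    (Finset.mem_univ i)

lemma grid_cover (c Δ : ℝ) (hΔ : 0 ≤ Δ) (m : ℕ) (hm : 0 < m) (t : ℝ) (ht : |t - c| ≤ Δ) :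
    ∃ k : Fin m, |t - (c - Δ + (2 * ((k : ℕ) : ℝ) + 1) * Δ / m)| ≤ Δ / m := by
  rcases eq_or_lt_of_le hΔ with h0 | hpos
  · refine ⟨⟨0, hm⟩, ?_⟩
    have h1 : t = c := by
      have := abs_le.mp (ht.trans_eq h0.symm)
      linarith [this.1, this.2]
    simp [← h0, h1]
  · have hm' : (0:ℝ) < m := by exact_mod_cast hm
    set u : ℝ := (t - c + Δ) * m / (2*Δ) with hu
    obtain ⟨ht1, ht2⟩ := abs_le.mp ht
    have hu0 : 0 ≤ u := by apply div_nonneg; nlinarith; linarith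
    have hum : u ≤ m := by rw [div_le_iff₀ (by linarith)]; nlinarith
    set k : ℕ := min ⌊u⌋₊ (m-1) with hk
    have hkm : k < m := by omega
    refine ⟨⟨k, hkm⟩, ?_⟩
    have hkl : (k:ℝ) ≤ u := by
      have : (k:ℝ) ≤ (⌊u⌋₊ : ℝ) := by exact_mod_cast Nat.min_le_left _ _
      exact this.trans (Nat.floor_le hu0)
    have hkr : u ≤ (k:ℝ) + 1 := by
      rcases lt_or_eq_of_le hum with h | h
      · have hf : ⌊u⌋₊ ≤ m - 1 := by
          have : ⌊u⌋₊ < m := by rw [Nat.floor_lt hu0]; exact h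
          omega
        have hkk : k = ⌊u⌋₊ := by omega
        rw [hkk]
        exact (Nat.lt_floor_add_one u).le
      · have hkk : k = m - 1 := by
          have hf : ⌊u⌋₊ = m := by rw [h]; simp
          omega
        rw [hkk]
        push_cast [Nat.cast_sub hm]
        linarith [h]
    have heq : t - (c - Δ + (2*(k:ℝ)+1)*Δ/m) = (2*Δ/m) * (u - k - 1/2) := by
      have hu2 : (2*Δ/m) * u = t - c + Δ := by
        rw [hu]; field_simp
      rw [mul_sub, mul_sub, hu2]
      ring
    rw [heq, abs_mul, abs_of_pos (by positivity : (0:ℝ) < 2*Δ/m)]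
    have habs : |u - (k:ℝ) - 1/2| ≤ 1/2 := abs_le.mpr ⟨by linarith, by linarith⟩
    calc 2*Δ/m * |u - (k:ℝ) - 1/2| ≤ 2*Δ/m * (1/2) :=
          mul_le_mul_of_nonneg_left habs (by positivity)
      _ = Δ/m := by ring


set_option maxHeartbeats 1000000 in
/-- Lemma (sup-norm covering numbers of the class `𝒢f`). -/
theorem statement9
    {d : ℕ} (hd : 1 ≤ d)
    (D : Set (Ed2 d)) (hDb : Bornology.IsBounded D)
    (K₁ K₂ : Ed d → ℝ)
    (hK₁b : ∃ C, ∀ v, |K₁ v| ≤ C) (hK₂b : ∃ C, ∀ v, |K₂ v| ≤ C)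
    (hK₁c : HasCompactSupport K₁) (hK₂c : HasCompactSupport K₂)
    (L₁ L₂ : ℝ) (hL₁ : 0 ≤ L₁) (hL₂ : 0 ≤ L₂)
    (hK₁lip : ∀ v w : Ed d, |K₁ v - K₁ w| ≤ L₁ * ⨆ i, |v i - w i|)
    (hK₂lip : ∀ v w : Ed d, |K₂ v - K₂ w| ≤ L₂ * ⨆ i, |v i - w i|)
    (h₁ h₂ : ℝ) (hh₁ : h₁ ∈ Set.Ioo (0 : ℝ) 1) (hh₂ : h₂ ∈ Set.Ioo (0 : ℝ) 1)
    (f : Ed2 d → ℝ)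
    (hfloc : ∀ C : Set (Ed2 d), Bornology.IsBounded C → ∃ M, ∀ z ∈ C, |f z| ≤ M)
    (hSf : 0 < Sf d K₁ K₂ h₁ h₂ D f)
    (ε : ℝ) (hε : 0 < ε) :
    ∃ F : Finset (Ed2 d → ℝ),
      (∀ φ ∈ F, ∃ C, ∀ z, |φ z| ≤ C) ∧
      (F.card : ℝ) ≤
        max 1 ((2 * LK d K₁ K₂ L₁ L₂ * Sf d K₁ K₂ h₁ h₂ D f * (h₁⁻¹ + h₂⁻¹) *
          diamE d D / ε) ^ (2 * d)) ∧
      ∀ g ∈ Gclass d K₁ K₂ h₁ h₂ D, ∃ φ ∈ F, ∀ z, |f z * g z - φ z| ≤ ε := by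
  classical
  haveI : NeZero d := ⟨by omega⟩
  haveI : Nonempty (Fin d) := ⟨⟨0, by omega⟩⟩
  obtain ⟨hh₁0, hh₁1⟩ := hh₁
  obtain ⟨hh₂0, hh₂1⟩ := hh₂
  obtain ⟨C₁, hC₁⟩ := hK₁b
  obtain ⟨C₂, hC₂⟩ := hK₂b
  have hC₁0 : 0 ≤ C₁ := (abs_nonneg _).trans (hC₁ 0)
  have hC₂0 : 0 ≤ C₂ := (abs_nonneg _).trans (hC₂ 0)
  -- sup norms
  have hsK₁ : ∀ v, |K₁ v| ≤ supNorm K₁ :=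
    fun v => le_ciSup ⟨C₁, by rintro _ ⟨v, rfl⟩; exact hC₁ v⟩ v
  have hsK₂ : ∀ v, |K₂ v| ≤ supNorm K₂ :=
    fun v => le_ciSup ⟨C₂, by rintro _ ⟨v, rfl⟩; exact hC₂ v⟩ v
  have hsK₁0 : 0 ≤ supNorm K₁ := (abs_nonneg _).trans (hsK₁ 0)
  have hsK₂0 : 0 ≤ supNorm K₂ := (abs_nonneg _).trans (hsK₂ 0)
  set LKv := LK d K₁ K₂ L₁ L₂ with hLKv
  have hLK0 : 0 ≤ LKv := add_nonneg (mul_nonneg hL₁ hsK₂0) (mul_nonneg hL₂ hsK₁0)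
  set Hs := h₁⁻¹ + h₂⁻¹ with hHsdef
  have hHs : 0 < Hs := by positivity
  set SfV := Sf d K₁ K₂ h₁ h₂ D f with hSfV
  set 𝒦 := bigK d K₁ K₂ h₁ h₂ D with h𝒦
  -- the big support set is bounded
  obtain ⟨RD, hRD⟩ := isBounded_iff_forall_norm_le.mp hDb
  obtain ⟨r₁, hr₁⟩ := isBounded_iff_forall_norm_le.mp hK₁c.isBounded
  obtain ⟨r₂, hr₂⟩ := isBounded_iff_forall_norm_le.mp hK₂c.isBounded
  have hsupp : ∀ zc ∈ D ∩ ratPoints d,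
      Function.support (Gfun d K₁ K₂ h₁ h₂ zc) ⊆ 𝒦 := by
    intro zc hzc
    exact Set.subset_biUnion_of_mem (Set.mem_image_of_mem _ hzc)
  have h𝒦b : Bornology.IsBounded 𝒦 := by
    rw [isBounded_iff_forall_norm_le]
    refine ⟨RD + max r₁ r₂, ?_⟩
    intro w hw
    simp only [h𝒦, bigK, Set.mem_iUnion, exists_prop] at hw
    obtain ⟨g, hg, hwg⟩ := hw
    obtain ⟨zc, hzc, rfl⟩ := hg
    have hne := hwg
    simp only [Function.mem_support, Gfun] at hne
    obtain ⟨hne1, hne2⟩ := mul_ne_zero_iff.mp hne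
    have ha1 : ‖h₁⁻¹ • (zc.1 - w.1)‖ ≤ r₁ := hr₁ _ (subset_tsupport _ hne1)
    have ha2 : ‖h₂⁻¹ • (zc.2 - w.2)‖ ≤ r₂ := hr₂ _ (subset_tsupport _ hne2)
    have hr₁0 : 0 ≤ r₁ := (norm_nonneg _).trans ha1
    have hr₂0 : 0 ≤ r₂ := (norm_nonneg _).trans ha2
    have hsm : ∀ (h r : ℝ) (v : Ed d), 0 < h → h < 1 → 0 ≤ r →
        ‖h⁻¹ • v‖ ≤ r → ‖v‖ ≤ r := by
      intro h r v hh0 hh1 hr0 hle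
      have hv : ‖h⁻¹ • v‖ = h⁻¹ * ‖v‖ := by
        rw [norm_smul, Real.norm_eq_abs, abs_of_pos (by positivity)]
      rw [hv] at hle
      have h2 : ‖v‖ = h * (h⁻¹ * ‖v‖) := by field_simp
      rw [h2]
      calc h * (h⁻¹ * ‖v‖) ≤ h * r := mul_le_mul_of_nonneg_left hle hh0.le
        _ ≤ 1 * r := mul_le_mul_of_nonneg_right hh1.le hr0
        _ = r := one_mul r
    have hb1 : ‖zc.1 - w.1‖ ≤ r₁ := hsm h₁ r₁ _ hh₁0 hh₁1 hr₁0 ha1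
    have hb2 : ‖zc.2 - w.2‖ ≤ r₂ := hsm h₂ r₂ _ hh₂0 hh₂1 hr₂0 ha2
    have hw1 : ‖w.1‖ ≤ RD + r₁ := by
      have : ‖w.1‖ = ‖zc.1 - (zc.1 - w.1)‖ := by congr 1; abel
      rw [this]
      calc ‖zc.1 - (zc.1 - w.1)‖ ≤ ‖zc.1‖ + ‖zc.1 - w.1‖ := norm_sub_le _ _
        _ ≤ RD + r₁ := add_le_add ((norm_fst_le zc).trans (hRD zc hzc.1)) hb1
    have hw2 : ‖w.2‖ ≤ RD + r₂ := by
      have : ‖w.2‖ = ‖zc.2 - (zc.2 - w.2)‖ := by congr 1; abel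
      rw [this]
      calc ‖zc.2 - (zc.2 - w.2)‖ ≤ ‖zc.2‖ + ‖zc.2 - w.2‖ := norm_sub_le _ _
        _ ≤ RD + r₂ := add_le_add ((norm_snd_le zc).trans (hRD zc hzc.1)) hb2
    rw [Prod.norm_def]
    exact max_le (hw1.trans (by linarith [le_max_left r₁ r₂]))
      (hw2.trans (by linarith [le_max_right r₁ r₂]))
  -- f is bounded by SfV on 𝒦
  obtain ⟨Mf, hMf⟩ := hfloc 𝒦 h𝒦b
  have hfS : ∀ w ∈ 𝒦, |f w| ≤ SfV := by
    intro w hw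
    exact le_ciSup (f := fun z : ↥𝒦 => |f (z : Ed2 d)|)
      ⟨Mf, by rintro _ ⟨z, rfl⟩; exact hMf z z.2⟩ (⟨w, hw⟩ : ↥𝒦)
  -- Lipschitz estimate for the kernel translates
  have hkey : ∀ (δ' : ℝ), 0 ≤ δ' → ∀ (z p : Ed2 d),
      (∀ i, |z.1 i - p.1 i| ≤ δ') → (∀ i, |z.2 i - p.2 i| ≤ δ') →
      ∀ w, |Gfun d K₁ K₂ h₁ h₂ z w - Gfun d K₁ K₂ h₁ h₂ p w| ≤ LKv * Hs * δ' := by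
    intro δ' hδ' z p hz1 hz2 w
    set a := h₁⁻¹ • (z.1 - w.1) with hadef
    set a' := h₁⁻¹ • (p.1 - w.1) with ha'def
    set b := h₂⁻¹ • (z.2 - w.2) with hbdef
    set b' := h₂⁻¹ • (p.2 - w.2) with hb'def
    have ha : ∀ i, |a i - a' i| ≤ h₁⁻¹ * δ' := by
      intro i
      have h1 : a i - a' i = h₁⁻¹ * (z.1 i - p.1 i) := by
        simp [hadef, ha'def, smul_eq_mul]; ring
      rw [h1, abs_mul, abs_of_pos (by positivity : (0:ℝ) < h₁⁻¹)]
      exact mul_le_mul_of_nonneg_left (hz1 i) (by positivity)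
    have hb : ∀ i, |b i - b' i| ≤ h₂⁻¹ * δ' := by
      intro i
      have h1 : b i - b' i = h₂⁻¹ * (z.2 i - p.2 i) := by
        simp [hbdef, hb'def, smul_eq_mul]; ring
      rw [h1, abs_mul, abs_of_pos (by positivity : (0:ℝ) < h₂⁻¹)]
      exact mul_le_mul_of_nonneg_left (hz2 i) (by positivity)
    have hA : |K₁ a - K₁ a'| ≤ L₁ * (h₁⁻¹ * δ') :=
      (hK₁lip a a').trans (mul_le_mul_of_nonneg_left (ciSup_le ha) hL₁)
    have hB : |K₂ b - K₂ b'| ≤ L₂ * (h₂⁻¹ * δ') :=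
      (hK₂lip b b').trans (mul_le_mul_of_nonneg_left (ciSup_le hb) hL₂)
    have hGz : Gfun d K₁ K₂ h₁ h₂ z w = K₁ a * K₂ b := rfl
    have hGp : Gfun d K₁ K₂ h₁ h₂ p w = K₁ a' * K₂ b' := rfl
    rw [hGz, hGp]
    have hsplit : K₁ a * K₂ b - K₁ a' * K₂ b' =
        (K₁ a - K₁ a') * K₂ b + K₁ a' * (K₂ b - K₂ b') := by ring
    rw [hsplit]
    calc |(K₁ a - K₁ a') * K₂ b + K₁ a' * (K₂ b - K₂ b')|
        ≤ |(K₁ a - K₁ a') * K₂ b| + |K₁ a' * (K₂ b - K₂ b')| := abs_add_le _ _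
      _ = |K₁ a - K₁ a'| * |K₂ b| + |K₁ a'| * |K₂ b - K₂ b'| := by
          rw [abs_mul, abs_mul]
      _ ≤ (L₁ * (h₁⁻¹ * δ')) * supNorm K₂ + supNorm K₁ * (L₂ * (h₂⁻¹ * δ')) :=
          add_le_add
            (mul_le_mul hA (hsK₂ b) (abs_nonneg _) (by positivity))
            (mul_le_mul (hsK₁ a') hB (abs_nonneg _) hsK₁0)
      _ ≤ LKv * Hs * δ' := by
          rw [hLKv, LK, hHsdef]
          have e1 : 0 ≤ L₁ * supNorm K₂ := mul_nonneg hL₁ hsK₂0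
          have e2 : 0 ≤ L₂ * supNorm K₁ := mul_nonneg hL₂ hsK₁0
          have p1 : (0:ℝ) < h₁⁻¹ := by positivity
          have p2 : (0:ℝ) < h₂⁻¹ := by positivity
          nlinarith [mul_nonneg (mul_nonneg e1 p2.le) hδ',
            mul_nonneg (mul_nonneg e2 p1.le) hδ']
  -- the covering estimate
  have hcov : ∀ (δ' : ℝ), 0 ≤ δ' → LKv * Hs * δ' * SfV ≤ ε →
      ∀ z ∈ D ∩ ratPoints d, ∀ p : Ed2 d,
      (∀ i, |z.1 i - p.1 i| ≤ δ') → (∀ i, |z.2 i - p.2 i| ≤ δ') →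
      ∀ w, |f w * Gfun d K₁ K₂ h₁ h₂ z w -
        (𝒦.indicator f w) * Gfun d K₁ K₂ h₁ h₂ p w| ≤ ε := by
    intro δ' hδ' hεb z hz p hp1 hp2 w
    by_cases hw : w ∈ 𝒦
    · rw [Set.indicator_of_mem hw]
      have h1 : f w * Gfun d K₁ K₂ h₁ h₂ z w - f w * Gfun d K₁ K₂ h₁ h₂ p w =
          f w * (Gfun d K₁ K₂ h₁ h₂ z w - Gfun d K₁ K₂ h₁ h₂ p w) := by ring
      rw [h1, abs_mul]
      calc |f w| * |Gfun d K₁ K₂ h₁ h₂ z w - Gfun d K₁ K₂ h₁ h₂ p w|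
          ≤ SfV * (LKv * Hs * δ') :=
            mul_le_mul (hfS w hw) (hkey δ' hδ' z p hp1 hp2 w) (abs_nonneg _) hSf.le
        _ = LKv * Hs * δ' * SfV := by ring
        _ ≤ ε := hεb
    · rw [Set.indicator_of_notMem hw]
      have hz0 : Gfun d K₁ K₂ h₁ h₂ z w = 0 := by
        by_contra h
        exact hw (hsupp z hz h)
      rw [hz0]
      simpa using hε.le
  -- every candidate function is bounded
  have hbdd : ∀ p : Ed2 d, ∃ C, ∀ w,
      |(𝒦.indicator f w) * Gfun d K₁ K₂ h₁ h₂ p w| ≤ C := by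
    intro p
    refine ⟨max SfV 0 * (C₁ * C₂), fun w => ?_⟩
    rw [abs_mul]
    have h1 : |𝒦.indicator f w| ≤ max SfV 0 := by
      by_cases hw : w ∈ 𝒦
      · rw [Set.indicator_of_mem hw]; exact (hfS w hw).trans (le_max_left _ _)
      · rw [Set.indicator_of_notMem hw]; simp
    have h2 : |Gfun d K₁ K₂ h₁ h₂ p w| ≤ C₁ * C₂ := by
      rw [Gfun, abs_mul]
      exact mul_le_mul (hC₁ _) (hC₂ _) (abs_nonneg _) hC₁0
    exact mul_le_mul h1 h2 (abs_nonneg _) (le_max_right SfV 0)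
  by_cases hDQ : (D ∩ ratPoints d).Nonempty
  · obtain ⟨z₀, hz₀⟩ := hDQ
    set Δ := diamE d D with hΔdef
    have hbS : BddAbove {r : ℝ | ∃ z ∈ D, ∃ w ∈ D,
        r = Real.sqrt (‖z.1 - w.1‖ ^ 2 + ‖z.2 - w.2‖ ^ 2)} := by
      refine ⟨Real.sqrt ((2*RD)^2 + (2*RD)^2), ?_⟩
      rintro r ⟨z, hz, w, hw, rfl⟩
      apply Real.sqrt_le_sqrt
      have hn1 : ‖z.1 - w.1‖ ≤ 2*RD := by
        have e1 := (norm_fst_le z).trans (hRD z hz)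
        have e2 := (norm_fst_le w).trans (hRD w hw)
        calc ‖z.1 - w.1‖ ≤ ‖z.1‖ + ‖w.1‖ := norm_sub_le _ _
          _ ≤ 2*RD := by linarith
      have hn2 : ‖z.2 - w.2‖ ≤ 2*RD := by
        have e1 := (norm_snd_le z).trans (hRD z hz)
        have e2 := (norm_snd_le w).trans (hRD w hw)
        calc ‖z.2 - w.2‖ ≤ ‖z.2‖ + ‖w.2‖ := norm_sub_le _ _
          _ ≤ 2*RD := by linarith
      nlinarith [norm_nonneg (z.1 - w.1), norm_nonneg (z.2 - w.2)]
    have hmem : ∀ z ∈ D, Real.sqrt (‖z.1 - z₀.1‖^2 + ‖z.2 - z₀.2‖^2) ≤ Δ :=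
      fun z hz => le_csSup hbS ⟨z, hz, z₀, hz₀.1, rfl⟩
    have hΔ0 : 0 ≤ Δ := (Real.sqrt_nonneg _).trans (hmem z₀ hz₀.1)
    have hc1 : ∀ z ∈ D, ∀ i, |z.1 i - z₀.1 i| ≤ Δ := by
      intro z hz i
      have e1 : |z.1 i - z₀.1 i| = |(z.1 - z₀.1) i| := by simp
      rw [e1]
      calc |(z.1 - z₀.1) i| ≤ ‖z.1 - z₀.1‖ := coord_le_norm _ i
        _ = Real.sqrt (‖z.1 - z₀.1‖^2) := (Real.sqrt_sq (norm_nonneg _)).symm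
        _ ≤ Real.sqrt (‖z.1 - z₀.1‖^2 + ‖z.2 - z₀.2‖^2) :=
            Real.sqrt_le_sqrt (le_add_of_nonneg_right (by positivity))
        _ ≤ Δ := hmem z hz
    have hc2 : ∀ z ∈ D, ∀ i, |z.2 i - z₀.2 i| ≤ Δ := by
      intro z hz i
      have e1 : |z.2 i - z₀.2 i| = |(z.2 - z₀.2) i| := by simp
      rw [e1]
      calc |(z.2 - z₀.2) i| ≤ ‖z.2 - z₀.2‖ := coord_le_norm _ i
        _ = Real.sqrt (‖z.2 - z₀.2‖^2) := (Real.sqrt_sq (norm_nonneg _)).symm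
        _ ≤ Real.sqrt (‖z.1 - z₀.1‖^2 + ‖z.2 - z₀.2‖^2) :=
            Real.sqrt_le_sqrt (le_add_of_nonneg_left (by positivity))
        _ ≤ Δ := hmem z hz
    by_cases hLKpos : 0 < LKv
    · set δ := ε / (LKv * SfV * Hs) with hδdef
      have hδ0 : 0 < δ := div_pos hε (by positivity)
      set m := max 1 ⌈Δ/δ⌉₊ with hmdef
      have hm0 : 0 < m := lt_of_lt_of_le one_pos (le_max_left _ _)
      have hmR : (0:ℝ) < m := by exact_mod_cast hm0
      have hΔm : Δ / m ≤ δ := by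
        rw [div_le_iff₀ hmR]
        have h1 : Δ/δ ≤ (m:ℝ) := by
          calc Δ/δ ≤ ⌈Δ/δ⌉₊ := Nat.le_ceil _
            _ ≤ m := by exact_mod_cast le_max_right 1 ⌈Δ/δ⌉₊
        calc Δ = (Δ/δ) * δ := by field_simp
          _ ≤ m * δ := mul_le_mul_of_nonneg_right h1 hδ0.le
          _ = δ * m := mul_comm _ _
      set ctr : (Fin d → Fin m) × (Fin d → Fin m) → Ed2 d := fun kl =>
        (mkE d fun i => z₀.1 i - Δ + (2*((kl.1 i : ℕ) : ℝ)+1)*Δ/m,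
         mkE d fun i => z₀.2 i - Δ + (2*((kl.2 i : ℕ) : ℝ)+1)*Δ/m) with hctr
      refine ⟨Finset.image (fun kl => fun w =>
        (𝒦.indicator f w) * Gfun d K₁ K₂ h₁ h₂ (ctr kl) w) Finset.univ, ?_, ?_, ?_⟩
      · intro φ hφ
        obtain ⟨kl, _, rfl⟩ := Finset.mem_image.mp hφ
        exact hbdd (ctr kl)
      · have hcard : (Finset.image (fun kl => fun w =>
            (𝒦.indicator f w) * Gfun d K₁ K₂ h₁ h₂ (ctr kl) w) Finset.univ).card
            ≤ m^(2*d) := by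
          refine Finset.card_image_le.trans ?_
          rw [Finset.card_univ, Fintype.card_prod, Fintype.card_fun,
            Fintype.card_fin, Fintype.card_fin, two_mul, pow_add]
        have hcast : ((Finset.image (fun kl => fun w =>
            (𝒦.indicator f w) * Gfun d K₁ K₂ h₁ h₂ (ctr kl) w) Finset.univ).card : ℝ)
            ≤ ((m:ℝ))^(2*d) := by exact_mod_cast hcard
        refine le_trans hcast ?_
        by_cases hsm : Δ/δ ≤ 1
        · have hm1 : m = 1 := by
            have h2 : ⌈Δ/δ⌉₊ ≤ 1 := Nat.ceil_le.mpr (by simpa using hsm)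
            omega
          rw [hm1]
          simpa using le_max_left (1:ℝ) _
        · push_neg at hsm
          have hpos' : (0:ℝ) ≤ Δ/δ := le_of_lt (lt_trans one_pos hsm)
          have hm1 : 1 ≤ ⌈Δ/δ⌉₊ := by
            rw [Nat.one_le_ceil_iff]
            linarith
          have hmeq : m = ⌈Δ/δ⌉₊ := max_eq_right hm1
          have hmle : (m:ℝ) ≤ 2*(Δ/δ) := by
            rw [hmeq]
            have := Nat.ceil_lt_add_one hpos'
            linarith
          have h2R : 2*(Δ/δ) = 2 * LKv * SfV * Hs * Δ / ε := by
            rw [hδdef]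
            field_simp
          refine le_max_of_le_right ?_
          push_cast
          exact pow_le_pow_left₀ (by positivity) (by rw [← h2R]; exact hmle) _
      · intro g hg
        obtain ⟨z, hzmem, rfl⟩ := hg
        have hg1 := fun i => grid_cover (z₀.1 i) Δ hΔ0 m hm0 (z.1 i) (hc1 z hzmem.1 i)
        choose k hk using hg1
        have hg2 := fun i => grid_cover (z₀.2 i) Δ hΔ0 m hm0 (z.2 i) (hc2 z hzmem.1 i)
        choose l hl using hg2
        refine ⟨_, Finset.mem_image_of_mem _ (Finset.mem_univ (k, l)), ?_⟩
        refine hcov δ hδ0.le ?_ z hzmem (ctr (k,l)) ?_ ?_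
        · have hne : LKv * SfV * Hs ≠ 0 := by positivity
          have heq : LKv * Hs * δ * SfV = (ε / (LKv * SfV * Hs)) * (LKv * SfV * Hs) := by
            rw [hδdef]; ring
          rw [heq, div_mul_cancel₀ _ hne]
        · intro i
          have e : (ctr (k,l)).1 i = z₀.1 i - Δ + (2*((k i : ℕ) : ℝ)+1)*Δ/m := rfl
          rw [e]
          exact (hk i).trans hΔm
        · intro i
          have e : (ctr (k,l)).2 i = z₀.2 i - Δ + (2*((l i : ℕ) : ℝ)+1)*Δ/m := rfl
          rw [e]
          exact (hl i).trans hΔm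
    · have hLKeq : LKv = 0 := le_antisymm (not_lt.mp hLKpos) hLK0
      refine ⟨{fun w => (𝒦.indicator f w) * Gfun d K₁ K₂ h₁ h₂ z₀ w}, ?_, ?_, ?_⟩
      · intro φ hφ
        rw [Finset.mem_singleton] at hφ
        subst hφ
        exact hbdd z₀
      · rw [Finset.card_singleton]
        simpa using le_max_left (1:ℝ) _
      · intro g hg
        obtain ⟨z, hzmem, rfl⟩ := hg
        refine ⟨_, Finset.mem_singleton_self _, ?_⟩
        refine hcov Δ hΔ0 ?_ z hzmem z₀ (fun i => hc1 z hzmem.1 i)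
          (fun i => hc2 z hzmem.1 i)
        rw [hLKeq]
        simpa using hε.le
  · refine ⟨∅, by simp, ?_, ?_⟩
    · simp only [Finset.card_empty, Nat.cast_zero]
      exact le_max_of_le_left zero_le_one
    · intro g hg
      obtain ⟨z, hz, _⟩ := hg
      exact absurd ⟨z, hz⟩ hDQ
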